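/- Let s = (s₁,s₂,s₃) ∈ ℝ³ with s₁,s₂,s₃ > 0. Then the following are equivalent: (i) p_r(s) > 0 for all r = 1,2,3 and s₁,s₂,s₃ are not all equal; (ii) there exists a = (a₁,a₂,a₃) ∈ ℝ³ such that M₆(s,a) is positive definite, s_{r+1} + s_{r+2} - s_r + a_r > 0 for all r, and a_r < a_r⁰(s) for all r. (This is the matrix-level statement that a homogeneous metric g_s on the complex flag manifold W⁶ = SU(3)/T² has strongly positive curvature if and only if it has sec > 0.) -/

import Mathlib

open Matrix

/-- `S(s) = 2(s₁s₂+s₁s₃+s₂s₃) - (s₁²+s₂²+s₃²)`. -/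
noncomputable def Spoly (s : Fin 3 → ℝ) : ℝ :=
  2 * (s 0 * s 1 + s 0 * s 2 + s 1 * s 2) - (s 0 ^ 2 + s 1 ^ 2 + s 2 ^ 2)

/-- `p_r(s) = (s_{r+1}-s_{r+2})² + 2 s_r (s_{r+1}+s_{r+2}) - 3 s_r²`, indices mod 3. -/
noncomputable def ppoly (s : Fin 3 → ℝ) (r : Fin 3) : ℝ :=
  (s (r + 1) - s (r + 2)) ^ 2 + 2 * s r * (s (r + 1) + s (r + 2)) - 3 * s r ^ 2

/-- `a_r⁰(s) = ((s_{r+1}-s_{r+2})² - s_r²)/(2 s_r)`, indices mod 3. -/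
noncomputable def a0 (s : Fin 3 → ℝ) (r : Fin 3) : ℝ :=
  ((s (r + 1) - s (r + 2)) ^ 2 - s r ^ 2) / (2 * s r)

/-- First block of the modified curvature operator of `(W⁶, g_s)`. -/
noncomputable def M6 (s a : Fin 3 → ℝ) : Matrix (Fin 3) (Fin 3) ℝ :=
  !![4 * s 0,                         -Spoly s / (2 * s 2) + a 2,  -Spoly s / (2 * s 1) + a 1;
     -Spoly s / (2 * s 2) + a 2,      4 * s 1,                     -Spoly s / (2 * s 0) + a 0;
     -Spoly s / (2 * s 1) + a 1,      -Spoly s / (2 * s 0) + a 0,  4 * s 2]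

lemma posDef3 (d1 d2 d3 b1 b2 b3 : ℝ) (h1 : 0 < d1) (hA : 0 < d1*d2 - b3^2)
    (hD : 0 < d1*d2*d3 + 2*b1*b2*b3 - d1*b1^2 - d2*b2^2 - d3*b3^2) :
    (!![d1, b3, b2; b3, d2, b1; b2, b1, d3]).PosDef := by
  rw [Matrix.posDef_iff_dotProduct_mulVec]
  constructor
  · ext i j
    fin_cases i <;> fin_cases j <;> simp [Matrix.conjTranspose_apply]
  · intro x hx
    have hq : dotProduct (star x) ((!![d1, b3, b2; b3, d2, b1; b2, b1, d3]) *ᵥ x)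
        = d1*(x 0)^2 + d2*(x 1)^2 + d3*(x 2)^2 + 2*b3*(x 0)*(x 1) + 2*b2*(x 0)*(x 2)
          + 2*b1*(x 1)*(x 2) := by
      simp [dotProduct, Matrix.mulVec, Fin.sum_univ_three]
      ring
    rw [hq]
    by_cases hz : x 2 = 0
    · by_cases hy : x 1 = 0
      · have hx0 : x 0 ≠ 0 := by
          intro h0
          exact hx (funext fun i => by fin_cases i <;> simp [h0, hy, hz])
        have hp : 0 < (x 0)^2 := by positivity
        rw [hy, hz]
        nlinarith [mul_pos h1 hp]
      · have hp : 0 < (x 1)^2 := by positivity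
        rw [hz]
        nlinarith [sq_nonneg (d1*(x 0) + b3*(x 1)), mul_pos hA hp]
    · have hp : 0 < (x 2)^2 := by positivity
      nlinarith [sq_nonneg (d1*(x 0) + b3*(x 1) + b2*(x 2)),
        sq_nonneg ((d1*d2 - b3^2)*(x 1) + (d1*b1 - b2*b3)*(x 2)),
        mul_pos h1 hA, mul_pos (mul_pos h1 hD) hp, mul_pos hA hp, mul_pos h1 hp]

set_option maxHeartbeats 2000000 in
/-- Matrix-level statement: `g_s` on `W⁶` has strongly positive curvature iff it has
`sec > 0`, i.e. `p_r(s) > 0` for all `r` and the `s_r` are not all equal. -/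
theorem stronglyPos_W6_iff (s : Fin 3 → ℝ) (hs : ∀ r, 0 < s r) :
    ((∀ r, 0 < ppoly s r) ∧ ¬ (s 0 = s 1 ∧ s 1 = s 2)) ↔
      ∃ a : Fin 3 → ℝ, (M6 s a).PosDef ∧
        (∀ r, 0 < s (r + 1) + s (r + 2) - s r + a r) ∧
        (∀ r, a r < a0 s r) := by
  have h0 := hs 0
  have h1 := hs 1
  have h2 := hs 2
  have i01 : ((0 : Fin 3) + 1) = 1 := by decide
  have i02 : ((0 : Fin 3) + 2) = 2 := by decide
  have i11 : ((1 : Fin 3) + 1) = 2 := by decide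
  have i12 : ((1 : Fin 3) + 2) = 0 := by decide
  have i21 : ((2 : Fin 3) + 1) = 0 := by decide
  have i22 : ((2 : Fin 3) + 2) = 1 := by decide
  constructor
  · rintro ⟨hp, hne⟩
    have hp0 : 0 < (s 1 - s 2)^2 + 2*s 0*(s 1 + s 2) - 3*(s 0)^2 := by
      have := hp 0; simp only [ppoly, i01, i02] at this; linarith
    have hp1 : 0 < (s 2 - s 0)^2 + 2*s 1*(s 2 + s 0) - 3*(s 1)^2 := by
      have := hp 1; simp only [ppoly, i11, i12] at this; linarith
    have hp2 : 0 < (s 0 - s 1)^2 + 2*s 2*(s 0 + s 1) - 3*(s 2)^2 := by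
      have := hp 2; simp only [ppoly, i21, i22] at this; linarith
    have hF : 0 < (s 0 - s 1)^2 + (s 1 - s 2)^2 + (s 2 - s 0)^2 := by
      rcases not_and_or.mp hne with h | h
      · have : 0 < (s 0 - s 1)^2 := by
          have := sub_ne_zero.mpr h; positivity
        nlinarith [sq_nonneg (s 1 - s 2), sq_nonneg (s 2 - s 0)]
      · have : 0 < (s 1 - s 2)^2 := by
          have := sub_ne_zero.mpr h; positivity
        nlinarith [sq_nonneg (s 0 - s 1), sq_nonneg (s 2 - s 0)]
    set u0 : ℝ := -Spoly s / (2 * s 0) + a0 s 0 with hu0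
    set u1 : ℝ := -Spoly s / (2 * s 1) + a0 s 1 with hu1
    set u2 : ℝ := -Spoly s / (2 * s 2) + a0 s 2 with hu2
    have hu0' : u0 = ((s 1 - s 2)^2 - s 0*(s 1 + s 2)) / (s 0) := by
      rw [hu0]; unfold Spoly a0; rw [i01, i02]; field_simp; ring
    have hu1' : u1 = ((s 2 - s 0)^2 - s 1*(s 2 + s 0)) / (s 1) := by
      rw [hu1]; unfold Spoly a0; rw [i11, i12]; field_simp; ring
    have hu2' : u2 = ((s 0 - s 1)^2 - s 2*(s 0 + s 1)) / (s 2) := by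
      rw [hu2]; unfold Spoly a0; rw [i21, i22]; field_simp; ring
    have hA0 : 0 < 4 * s 0 * (4 * s 1) - u2 ^ 2 := by
      rw [hu2', div_pow]
      rw [show (4:ℝ) * s 0 * (4 * s 1) - ((s 0 - s 1)^2 - s 2*(s 0 + s 1))^2 / (s 2)^2
          = (16 * s 0 * s 1 * (s 2)^2 - ((s 0 - s 1)^2 - s 2*(s 0 + s 1))^2) / (s 2)^2 by
        field_simp; ring]
      apply div_pos _ (by positivity)
      nlinarith [mul_pos hp0 hp1, mul_pos h0 h1, mul_pos h1 h2, mul_pos h0 h2,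
        sq_nonneg (s 0 - s 1), sq_nonneg (s 0 + s 1 - 2*s 2),
        mul_pos (mul_pos h0 h1) h2, sq_nonneg (s 0 - s 2), sq_nonneg (s 1 - s 2)]
    have hD0 : 0 < 4*s 0*(4*s 1)*(4*s 2) + 2*u0*u1*u2
        - 4*s 0*u0^2 - 4*s 1*u1^2 - 4*s 2*u2^2 := by
      rw [hu0', hu1', hu2']
      have hkey : 0 < 32*(s 0*s 1*s 2)^2
          - 2*(((s 1-s 2)^2 - s 0*(s 1+s 2))^2*s 1*s 2 + ((s 2-s 0)^2 - s 1*(s 2+s 0))^2*s 0*s 2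
              + ((s 0-s 1)^2 - s 2*(s 0+s 1))^2*s 0*s 1)
          + ((s 1-s 2)^2 - s 0*(s 1+s 2)) * ((s 2-s 0)^2 - s 1*(s 2+s 0))
            * ((s 0-s 1)^2 - s 2*(s 0+s 1)) := by
        nlinarith [mul_pos (mul_pos hp0 hp1) hp2, mul_pos (mul_pos h0 h1) h2,
          mul_pos hp0 hp1, mul_pos hp1 hp2, mul_pos hp0 hp2,
          mul_pos hF (mul_pos (mul_pos h0 h1) h2),
          mul_pos (mul_pos h0 h1) (mul_pos h2 hF),
          sq_nonneg (s 0 - s 1), sq_nonneg (s 1 - s 2), sq_nonneg (s 0 - s 2),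
          mul_pos h0 h1, mul_pos h1 h2, mul_pos h0 h2,
          mul_pos (mul_pos hp0 h1) h2, mul_pos (mul_pos hp1 h0) h2,
          mul_pos (mul_pos hp2 h0) h1]
      rw [show 4*s 0*(4*s 1)*(4*s 2)
            + 2*(((s 1-s 2)^2 - s 0*(s 1+s 2))/(s 0))*(((s 2-s 0)^2 - s 1*(s 2+s 0))/(s 1))
              *(((s 0-s 1)^2 - s 2*(s 0+s 1))/(s 2))
            - 4*s 0*(((s 1-s 2)^2 - s 0*(s 1+s 2))/(s 0))^2
            - 4*s 1*(((s 2-s 0)^2 - s 1*(s 2+s 0))/(s 1))^2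
            - 4*s 2*(((s 0-s 1)^2 - s 2*(s 0+s 1))/(s 2))^2
          = 2*(32*(s 0*s 1*s 2)^2
              - 2*(((s 1-s 2)^2 - s 0*(s 1+s 2))^2*s 1*s 2 + ((s 2-s 0)^2 - s 1*(s 2+s 0))^2*s 0*s 2
                  + ((s 0-s 1)^2 - s 2*(s 0+s 1))^2*s 0*s 1)
              + ((s 1-s 2)^2 - s 0*(s 1+s 2)) * ((s 2-s 0)^2 - s 1*(s 2+s 0))
                * ((s 0-s 1)^2 - s 2*(s 0+s 1))) / (s 0 * s 1 * s 2) by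
        field_simp; ring]
      exact div_pos (by linarith) (by positivity)
    set B : ℝ := min (ppoly s 0 / (2 * s 0)) (min (ppoly s 1 / (2 * s 1)) (ppoly s 2 / (2 * s 2)))
      with hB
    have hBpos : 0 < B := by
      apply lt_min (div_pos (hp 0) (by positivity))
      exact lt_min (div_pos (hp 1) (by positivity)) (div_pos (hp 2) (by positivity))
    have cont2 : Continuous (fun ε : ℝ => 4 * s 0 * (4 * s 1) - (u2 - ε) ^ 2) := by
      fun_prop
    have cont3 : Continuous (fun ε : ℝ => 4*s 0*(4*s 1)*(4*s 2) + 2*(u0-ε)*(u1-ε)*(u2-ε)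
        - 4*s 0*(u0-ε)^2 - 4*s 1*(u1-ε)^2 - 4*s 2*(u2-ε)^2) := by
      fun_prop
    have ev2 : ∀ᶠ ε in nhdsWithin (0:ℝ) (Set.Ioi 0), 0 < 4 * s 0 * (4 * s 1) - (u2 - ε) ^ 2 := by
      have ht : Filter.Tendsto (fun ε : ℝ => 4 * s 0 * (4 * s 1) - (u2 - ε) ^ 2)
          (nhdsWithin 0 (Set.Ioi 0)) (nhds (4 * s 0 * (4 * s 1) - (u2 - 0) ^ 2)) :=
        (cont2.tendsto 0).mono_left nhdsWithin_le_nhds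
      exact ht.eventually_const_lt (by simpa using hA0)
    have ev3 : ∀ᶠ ε in nhdsWithin (0:ℝ) (Set.Ioi 0),
        0 < 4*s 0*(4*s 1)*(4*s 2) + 2*(u0-ε)*(u1-ε)*(u2-ε)
          - 4*s 0*(u0-ε)^2 - 4*s 1*(u1-ε)^2 - 4*s 2*(u2-ε)^2 := by
      have ht := (cont3.tendsto 0).mono_left (nhdsWithin_le_nhds (s := Set.Ioi (0:ℝ)))
      exact ht.eventually_const_lt (by simpa using hD0)
    have evB : ∀ᶠ ε in nhdsWithin (0:ℝ) (Set.Ioi 0), ε < B := by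
      have ht : Filter.Tendsto (fun ε : ℝ => ε) (nhdsWithin (0:ℝ) (Set.Ioi 0)) (nhds 0) :=
        (continuous_id.tendsto 0).mono_left nhdsWithin_le_nhds
      exact ht.eventually_lt_const hBpos
    have evmem : ∀ᶠ ε in nhdsWithin (0:ℝ) (Set.Ioi 0), ε ∈ Set.Ioi (0:ℝ) :=
      eventually_mem_nhdsWithin
    obtain ⟨ε, hε2, hε3, hεB, hεpos⟩ := ((ev2.and (ev3.and (evB.and evmem)))).exists
    refine ⟨fun r => a0 s r - ε, ?_, ?_, ?_⟩
    · have hM : M6 s (fun r => a0 s r - ε)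
          = !![4 * s 0, u2 - ε, u1 - ε; u2 - ε, 4 * s 1, u0 - ε; u1 - ε, u0 - ε, 4 * s 2] := by
        simp only [M6]
        rw [show -Spoly s / (2 * s 2) + (a0 s 2 - ε) = u2 - ε by rw [hu2]; ring,
            show -Spoly s / (2 * s 1) + (a0 s 1 - ε) = u1 - ε by rw [hu1]; ring,
            show -Spoly s / (2 * s 0) + (a0 s 0 - ε) = u0 - ε by rw [hu0]; ring]
      rw [hM]
      exact posDef3 _ _ _ _ _ _ (by positivity) hε2 hε3
    · intro r
      have hkey : s (r+1) + s (r+2) - s r + a0 s r = ppoly s r / (2 * s r) := by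
        have hne' : s r ≠ 0 := (hs r).ne'
        unfold a0 ppoly
        field_simp
        ring
      have hBr : B ≤ ppoly s r / (2 * s r) := by
        fin_cases r
        · exact min_le_left _ _
        · exact le_trans (min_le_right _ _) (min_le_left _ _)
        · exact le_trans (min_le_right _ _) (min_le_right _ _)
      have : ε < ppoly s r / (2 * s r) := lt_of_lt_of_le hεB hBr
      show 0 < s (r+1) + s (r+2) - s r + (a0 s r - ε)
      linarith [hkey]
    · intro r
      show a0 s r - ε < a0 s r
      have : (0:ℝ) < ε := hεpos
      linarith
  · rintro ⟨a, hPD, hlow, hup⟩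
    constructor
    · intro r
      have hl := hlow r
      have hu := hup r
      have hsr := hs r
      unfold a0 at hu
      rw [lt_div_iff₀ (by positivity)] at hu
      unfold ppoly
      nlinarith [mul_pos hsr hl]
    · rintro ⟨e01, e12⟩
      have hxne : (![1,1,1] : Fin 3 → ℝ) ≠ 0 := by
        intro h
        have := congrFun h 0
        simp at this
      have hx := hPD.dotProduct_mulVec_pos hxne
      have hq : dotProduct (star (![1,1,1] : Fin 3 → ℝ)) ((M6 s a) *ᵥ ![1,1,1])
          = 4*s 0 + 4*s 1 + 4*s 2 + 2*(-Spoly s/(2*s 2) + a 2) + 2*(-Spoly s/(2*s 1) + a 1)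
            + 2*(-Spoly s/(2*s 0) + a 0) := by
        simp [M6, dotProduct, Matrix.mulVec, Fin.sum_univ_three]
        ring
      rw [hq] at hx
      have hA0 := hup 0
      have hA1 := hup 1
      have hA2 := hup 2
      unfold a0 at hA0 hA1 hA2
      rw [i01, i02] at hA0
      rw [i11, i12] at hA1
      rw [i21, i22] at hA2
      have hs1 : s 1 = s 0 := e01.symm
      have hs2 : s 2 = s 0 := by rw [← e12, ← e01]
      rw [hs1, hs2] at hx hA0 hA1 hA2
      unfold Spoly at hx
      rw [hs1, hs2] at hx
      rw [lt_div_iff₀ (by positivity)] at hA0 hA1 hA2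
      have h2s : (0:ℝ) < 2 * s 0 := by positivity
      field_simp at hx
      nlinarith [hx, hA0, hA1, hA2, h0]
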